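/- In the exchange market with uniform price λ̄ = OPT/(2·Γ̄) where Γ̄ = Σ_i Γ_i and OPT is the optimal market liquid welfare, and with buyers B = {i : v_i ≥ λ̄} and sellers S = {i : v_i < λ̄}: if an equilibrium state (x,p) satisfies x_j = −Γ_j for all sellers j ∈ S and p_i = λ̄·x_i ≤ B_i for all buyers i ∈ B with Σ_i x_i = 0, then MLW(x) = Σ_{i∈B}(v_i·Γ_i + min{v_i·x_i, B_i}) + Σ_{j∈S} v_j·max{0, Γ_j + x_j} ≥ OPT/2. -/

import Mathlib

open Finset

/-- Market Approximate Price, first case: with uniform price `λ̄ = OPT/(2Γ̄)`,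
if in the equilibrium every seller sells the entire endowment, then the market
liquid welfare is at least `OPT/2`. -/
theorem stmt_2 (n : ℕ) (v B Γ : ℕ → ℝ)
    (hv : ∀ i ∈ Icc 1 n, 0 < v i)
    (hB : ∀ i ∈ Icc 1 n, 0 ≤ B i) (hΓ : ∀ i ∈ Icc 1 n, 0 ≤ Γ i)
    (Γbar OPT : ℝ) (hΓbar : Γbar = ∑ i ∈ Icc 1 n, Γ i) (hΓpos : 0 < Γbar)
    (hOPT : IsGreatest {w : ℝ | ∃ y : ℕ → ℝ,
      (∑ i ∈ Icc 1 n, y i = 0) ∧ (∀ i ∈ Icc 1 n, -Γ i ≤ y i) ∧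
      w = ∑ i ∈ Icc 1 n, (v i * Γ i + min (v i * y i) (B i))} OPT)
    (lam : ℝ) (hlam : lam = OPT / (2 * Γbar))
    (x p : ℕ → ℝ)
    (hsum : ∑ i ∈ Icc 1 n, x i = 0)
    (hfeas : ∀ i ∈ Icc 1 n, -Γ i ≤ x i)
    (hsell : ∀ j ∈ Icc 1 n, v j < lam → x j = -Γ j)
    (hbuy : ∀ i ∈ Icc 1 n, lam ≤ v i → 0 ≤ x i ∧ p i = lam * x i ∧ p i ≤ B i) :
    OPT / 2 ≤
      ∑ i ∈ (Icc 1 n).filter (fun i => lam ≤ v i),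
        (v i * Γ i + min (v i * x i) (B i))
      + ∑ j ∈ (Icc 1 n).filter (fun j => v j < lam),
        v j * max 0 (Γ j + x j) := by
  -- OPT ≥ 0 via y = 0
  have hOPT0 : 0 ≤ OPT := by
    have hmem : (∑ i ∈ Icc 1 n, (v i * Γ i + min (v i * 0) (B i))) ∈
        {w : ℝ | ∃ y : ℕ → ℝ,
          (∑ i ∈ Icc 1 n, y i = 0) ∧ (∀ i ∈ Icc 1 n, -Γ i ≤ y i) ∧
          w = ∑ i ∈ Icc 1 n, (v i * Γ i + min (v i * y i) (B i))} := by
      exact ⟨fun _ => 0, by simp, fun i hi => by simpa using neg_nonpos.mpr (hΓ i hi), rfl⟩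
    have h1 := hOPT.2 hmem
    have h2 : 0 ≤ ∑ i ∈ Icc 1 n, (v i * Γ i + min (v i * 0) (B i)) := by
      apply Finset.sum_nonneg
      intro i hi
      have := hv i hi; have := hΓ i hi; have := hB i hi
      have : min (v i * 0) (B i) = 0 := by
        rw [mul_zero]; exact min_eq_left (hB i hi)
      rw [this]
      nlinarith [hv i hi, hΓ i hi]
    linarith
  have hlam0 : 0 ≤ lam := by
    rw [hlam]
    positivity
  -- seller sum is zero
  have hS : ∑ j ∈ (Icc 1 n).filter (fun j => v j < lam),
      v j * max 0 (Γ j + x j) = 0 := by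
    apply Finset.sum_eq_zero
    intro j hj
    rw [mem_filter] at hj
    rw [hsell j hj.1 hj.2]
    simp
  -- buyer sum ≥ λ * Σ_{buyers}(Γ_i + x_i)
  have hBsum : ∑ i ∈ (Icc 1 n).filter (fun i => lam ≤ v i),
      lam * (Γ i + x i) ≤
      ∑ i ∈ (Icc 1 n).filter (fun i => lam ≤ v i),
      (v i * Γ i + min (v i * x i) (B i)) := by
    apply Finset.sum_le_sum
    intro i hi
    rw [mem_filter] at hi
    obtain ⟨hx0, hp, hpB⟩ := hbuy i hi.1 hi.2
    have hΓi := hΓ i hi.1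
    have h1 : lam * Γ i ≤ v i * Γ i := mul_le_mul_of_nonneg_right hi.2 hΓi
    have h2 : lam * x i ≤ min (v i * x i) (B i) := by
      apply le_min
      · exact mul_le_mul_of_nonneg_right hi.2 hx0
      · linarith
    linarith [mul_add lam (Γ i) (x i)]
  -- Σ_{buyers}(Γ+x) = Γbar
  have hsplit : ∑ i ∈ (Icc 1 n).filter (fun i => lam ≤ v i), (Γ i + x i)
      = Γbar := by
    have hfull : ∑ i ∈ Icc 1 n, (Γ i + x i) = Γbar := by
      rw [Finset.sum_add_distrib, hsum, hΓbar]; ring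
    have hSzero : ∑ j ∈ (Icc 1 n).filter (fun j => ¬ lam ≤ v j), (Γ j + x j) = 0 := by
      apply Finset.sum_eq_zero
      intro j hj
      rw [mem_filter] at hj
      rw [hsell j hj.1 (lt_of_not_ge hj.2)]
      ring
    have := Finset.sum_filter_add_sum_filter_not (Icc 1 n) (fun i => lam ≤ v i)
      (fun i => Γ i + x i)
    rw [hSzero] at this
    linarith [hfull, this]
  have hkey : lam * Γbar = OPT / 2 := by
    rw [hlam]
    field_simp
  calc OPT / 2 = lam * Γbar := hkey.symm
    _ = ∑ i ∈ (Icc 1 n).filter (fun i => lam ≤ v i), lam * (Γ i + x i) := by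
        rw [← Finset.mul_sum, hsplit]
    _ ≤ ∑ i ∈ (Icc 1 n).filter (fun i => lam ≤ v i),
        (v i * Γ i + min (v i * x i) (B i)) := hBsum
    _ ≤ _ := by rw [hS]; simp
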